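/- For an odd integer d ≥ 1, the spectral radius of the graph (K₁ ∪ K₂) ∨ complement((d-1)/2 · K₂) equals the largest root of x³ - (d-2)x² - 2dx + d - 1 = 0. -/
import Mathlib


open scoped Classical

/-- The vertex type of `(K₁ ∪ K₂) ∨ complement(((d-1)/2) • K₂)`: three vertices for
`K₁ ∪ K₂` and `d - 1` vertices for the cocktail party graph. -/
abbrev JoinVert (d : ℕ) := Fin 3 ⊕ Fin (d - 1)

/-- The graph `(K₁ ∪ K₂) ∨ complement(((d-1)/2) • K₂)`: on the left part, vertices `1` and `2`
form a `K₂` and `0` is isolated; on the right part, we have the cocktail party graph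
(complement of a perfect matching pairing `2k` with `2k+1`); all cross edges are present. -/
def JoinGraph (d : ℕ) : SimpleGraph (JoinVert d) :=
  SimpleGraph.fromRel fun a b =>
    match a, b with
    | .inl x, .inl y => x ≠ 0 ∧ y ≠ 0
    | .inr i, .inr j => (i : ℕ) / 2 ≠ (j : ℕ) / 2
    | _, _ => True

/-- `μ` is an eigenvalue of the real matrix `M`. -/
def HasEig {n : Type*} [Fintype n] (M : Matrix n n ℝ) (μ : ℝ) : Prop :=
  ∃ v : n → ℝ, v ≠ 0 ∧ M.mulVec v = μ • v

/-- The adjacency matrix of `JoinGraph d`. -/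
noncomputable def JoinAdj (d : ℕ) : Matrix (JoinVert d) (JoinVert d) ℝ :=
  fun a b => if (JoinGraph d).Adj a b then 1 else 0

-- auxiliary lemmas

lemma adj_ll (d : ℕ) (x y : Fin 3) :
    (JoinGraph d).Adj (.inl x) (.inl y) ↔ x ≠ y ∧ x ≠ 0 ∧ y ≠ 0 := by
  simp [JoinGraph, SimpleGraph.fromRel_adj]
  tauto

lemma adj_lr (d : ℕ) (x : Fin 3) (j : Fin (d-1)) :
    (JoinGraph d).Adj (.inl x) (.inr j) := by
  simp [JoinGraph, SimpleGraph.fromRel_adj]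

lemma adj_rl (d : ℕ) (x : Fin 3) (j : Fin (d-1)) :
    (JoinGraph d).Adj (.inr j) (.inl x) := by
  simp [JoinGraph, SimpleGraph.fromRel_adj]

lemma adj_rr (d : ℕ) (i j : Fin (d-1)) :
    (JoinGraph d).Adj (.inr i) (.inr j) ↔ (i : ℕ)/2 ≠ (j : ℕ)/2 := by
  simp only [JoinGraph, SimpleGraph.fromRel_adj]
  constructor
  · rintro ⟨h1, h2 | h2⟩ <;> omega
  · intro h
    exact ⟨by simp [Fin.ext_iff]; omega, Or.inl h⟩

def mate0 {n : ℕ} (hn : Even n) (i : Fin n) : Fin n :=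
  ⟨2*((i:ℕ)/2), by obtain ⟨r, rfl⟩ := hn; have := i.2; omega⟩

def mate1 {n : ℕ} (hn : Even n) (i : Fin n) : Fin n :=
  ⟨2*((i:ℕ)/2)+1, by obtain ⟨r, rfl⟩ := hn; have := i.2; omega⟩

lemma mate0_val {n : ℕ} (hn : Even n) (i : Fin n) : ((mate0 hn i : Fin n) : ℕ) = 2*((i:ℕ)/2) := rfl
lemma mate1_val {n : ℕ} (hn : Even n) (i : Fin n) : ((mate1 hn i : Fin n) : ℕ) = 2*((i:ℕ)/2)+1 := rfl

lemma mate_self {n : ℕ} (hn : Even n) (i : Fin n) :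
    i = mate0 hn i ∨ i = mate1 hn i := by
  rcases Nat.even_or_odd (i:ℕ) with ⟨t, ht⟩ | ⟨t, ht⟩
  · left; apply Fin.ext; rw [mate0_val]; omega
  · right; apply Fin.ext; rw [mate1_val]; omega

lemma mate0_mate0 {n : ℕ} (hn : Even n) (i : Fin n) : mate0 hn (mate0 hn i) = mate0 hn i := by
  apply Fin.ext; simp only [mate0_val, mate1_val]; omega

lemma mate1_mate0 {n : ℕ} (hn : Even n) (i : Fin n) : mate1 hn (mate0 hn i) = mate1 hn i := by
  apply Fin.ext; simp only [mate0_val, mate1_val]; omega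

lemma mate0_mate1 {n : ℕ} (hn : Even n) (i : Fin n) : mate0 hn (mate1 hn i) = mate0 hn i := by
  apply Fin.ext; simp only [mate0_val, mate1_val]; omega

lemma mate1_mate1 {n : ℕ} (hn : Even n) (i : Fin n) : mate1 hn (mate1 hn i) = mate1 hn i := by
  apply Fin.ext; simp only [mate0_val, mate1_val]; omega

lemma mate_ne {n : ℕ} (hn : Even n) (i : Fin n) : mate0 hn i ≠ mate1 hn i := by
  simp [Fin.ext_iff, mate0_val, mate1_val]

open Finset in
lemma sum_row_inr {n : ℕ} (hn : Even n) (i : Fin n) (w : Fin n → ℝ) :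
    ∑ j : Fin n, (if (i:ℕ)/2 ≠ (j:ℕ)/2 then (1:ℝ) else 0) * w j
      = (∑ j, w j) - w (mate0 hn i) - w (mate1 hn i) := by
  have hpair : Finset.filter (fun j : Fin n => (i:ℕ)/2 = (j:ℕ)/2) Finset.univ
      = {mate0 hn i, mate1 hn i} := by
    ext j
    simp [Fin.ext_iff, mate0_val, mate1_val]
    omega
  have key : ∑ j : Fin n, (if (i:ℕ)/2 = (j:ℕ)/2 then (1:ℝ) else 0) * w j
      = w (mate0 hn i) + w (mate1 hn i) := by
    rw [show (fun j : Fin n => (if (i:ℕ)/2 = (j:ℕ)/2 then (1:ℝ) else 0) * w j)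
        = fun j : Fin n => if (i:ℕ)/2 = (j:ℕ)/2 then w j else 0 from by
      funext j; by_cases h : (i:ℕ)/2 = (j:ℕ)/2 <;> simp [h]]
    rw [← Finset.sum_filter, hpair, Finset.sum_pair (mate_ne hn i)]
  have expand : ∀ j : Fin n, (if (i:ℕ)/2 ≠ (j:ℕ)/2 then (1:ℝ) else 0) * w j
      = w j - (if (i:ℕ)/2 = (j:ℕ)/2 then (1:ℝ) else 0) * w j := by
    intro j; by_cases h : (i:ℕ)/2 = (j:ℕ)/2 <;> simp [h]
  rw [Finset.sum_congr rfl (fun j _ => expand j), Finset.sum_sub_distrib, key]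
  ring

lemma joinAdj_mulVec (d : ℕ) (w : JoinVert d → ℝ) (a : JoinVert d) :
    (JoinAdj d).mulVec w a
      = (∑ y : Fin 3, (if (JoinGraph d).Adj a (.inl y) then (1:ℝ) else 0) * w (.inl y))
      + ∑ j : Fin (d-1), (if (JoinGraph d).Adj a (.inr j) then (1:ℝ) else 0) * w (.inr j) := by
  simp [Matrix.mulVec, dotProduct, JoinAdj, Fintype.sum_sum_type]

lemma row0 (d : ℕ) (w : JoinVert d → ℝ) :
    (JoinAdj d).mulVec w (.inl 0) = ∑ j : Fin (d-1), w (.inr j) := by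
  rw [joinAdj_mulVec]
  simp [Fin.sum_univ_three, adj_ll, adj_lr]

lemma row1 (d : ℕ) (w : JoinVert d → ℝ) :
    (JoinAdj d).mulVec w (.inl 1) = w (.inl 2) + ∑ j : Fin (d-1), w (.inr j) := by
  rw [joinAdj_mulVec]
  simp [Fin.sum_univ_three, adj_ll, adj_lr]

lemma row2 (d : ℕ) (w : JoinVert d → ℝ) :
    (JoinAdj d).mulVec w (.inl 2) = w (.inl 1) + ∑ j : Fin (d-1), w (.inr j) := by
  rw [joinAdj_mulVec]
  simp [Fin.sum_univ_three, adj_ll, adj_lr]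

lemma rowr (d : ℕ) (hn : Even (d-1)) (i : Fin (d-1)) (w : JoinVert d → ℝ) :
    (JoinAdj d).mulVec w (.inr i)
      = w (.inl 0) + w (.inl 1) + w (.inl 2)
      + ((∑ j : Fin (d-1), w (.inr j)) - w (.inr (mate0 hn i)) - w (.inr (mate1 hn i))) := by
  rw [joinAdj_mulVec]
  have h2 : ∑ j : Fin (d-1), (if (JoinGraph d).Adj (.inr i) (.inr j) then (1:ℝ) else 0) * w (.inr j)
      = (∑ j : Fin (d-1), w (.inr j)) - w (.inr (mate0 hn i)) - w (.inr (mate1 hn i)) := by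
    rw [← sum_row_inr hn i (fun j => w (.inr j))]
    apply Finset.sum_congr rfl
    intro j _
    rw [adj_rr]
    congr
  rw [h2]
  simp [Fin.sum_univ_three, adj_rl]

theorem stmt3 (d : ℕ) (hd : 1 ≤ d) (hodd : Odd d) (α : ℝ)
    (hroot : α ^ 3 - ((d : ℝ) - 2) * α ^ 2 - 2 * d * α + d - 1 = 0)
    (hmax : ∀ x : ℝ, x ^ 3 - ((d : ℝ) - 2) * x ^ 2 - 2 * d * x + d - 1 = 0 → x ≤ α) :
    HasEig (JoinAdj d) α ∧ ∀ μ : ℝ, HasEig (JoinAdj d) μ → μ ≤ α := by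
  have hn : Even (d - 1) := by obtain ⟨k, rfl⟩ := hodd; exact ⟨k, by omega⟩
  have hd1 : (1:ℝ) ≤ (d:ℝ) := by exact_mod_cast hd
  have hcast : ((d - 1 : ℕ) : ℝ) = (d : ℝ) - 1 := by
    rw [Nat.cast_sub hd]; norm_num
  -- α is nonnegative
  have hα0 : 0 ≤ α := by
    set f : ℝ → ℝ := fun x => x ^ 3 - ((d : ℝ) - 2) * x ^ 2 - 2 * d * x + d - 1 with hf
    have hc : ContinuousOn f (Set.Icc (0:ℝ) 1) := by fun_prop
    have h01 : (0:ℝ) ∈ Set.Icc (f 1) (f 0) := by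
      constructor <;> simp [hf] <;> nlinarith
    obtain ⟨x, hxI, hfx⟩ := intermediate_value_Icc' (by norm_num : (0:ℝ) ≤ 1) hc h01
    have := hmax x hfx
    have := hxI.1
    linarith
  constructor
  · -- existence of eigenvector for α
    rcases Nat.lt_or_ge d 2 with hdlt | hd2
    · -- d = 1
      have hd1' : d = 1 := by omega
      subst hd1'
      have hα1 : (1:ℝ) ≤ α := hmax 1 (by norm_num)
      have hfac : α * ((α - 1) * (α + 2)) = 0 := by
        push_cast at hroot; linear_combination hroot
      have hαeq : α = 1 := by
        rcases mul_eq_zero.mp hfac with h | h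
        · linarith
        · rcases mul_eq_zero.mp h with h | h <;> linarith
      refine ⟨Sum.elim (fun x : Fin 3 => if x = 0 then (0:ℝ) else 1) (fun _ => 0), ?_, ?_⟩
      · intro h
        have := congrFun h (Sum.inl 1)
        simp at this
      · funext z
        rcases z with x | j
        · fin_cases x
          · show (JoinAdj 1).mulVec _ (Sum.inl 0) = _
            rw [row0]; simp [hαeq]
          · show (JoinAdj 1).mulVec _ (Sum.inl 1) = _
            rw [row1]; simp [hαeq]
          · show (JoinAdj 1).mulVec _ (Sum.inl 2) = _
            rw [row2]; simp [hαeq]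
        · exact j.elim0
    · -- d ≥ 2
      have hdr : (2:ℝ) ≤ (d:ℝ) := by exact_mod_cast hd2
      set A : ℝ := ((d:ℝ) - 1) * (α - 1) with hA
      set B : ℝ := ((d:ℝ) - 1) * α with hB
      set C : ℝ := α * (α - 1) with hC
      set w : JoinVert d → ℝ := Sum.elim ![A, B, B] (fun _ => C) with hw
      have hScst : ∑ j : Fin (d-1), w (.inr j) = ((d:ℝ) - 1) * C := by
        simp only [hw, Sum.elim_inr, Finset.sum_const, Finset.card_univ, Fintype.card_fin,
          nsmul_eq_mul, hcast]
      refine ⟨w, ?_, ?_⟩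
      · intro h
        rcases eq_or_ne α 0 with h0 | hα0'
        · have hA0 : A = 0 := congrFun h (Sum.inl 0)
          rw [hA, h0] at hA0
          rcases mul_eq_zero.mp hA0 with h1 | h1 <;> linarith
        · rcases eq_or_ne α 1 with h1' | hα1'
          · have hB0 : B = 0 := congrFun h (Sum.inl 1)
            rw [hB, h1'] at hB0
            rcases mul_eq_zero.mp hB0 with h1 | h1 <;> linarith
          · have hC0 : C = 0 := congrFun h (Sum.inr ⟨0, by omega⟩)
            rw [hC] at hC0
            rcases mul_eq_zero.mp hC0 with h1 | h1
            · exact hα0' h1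
            · exact hα1' (by linarith)
      · funext z
        rcases z with x | j
        · fin_cases x
          · show (JoinAdj d).mulVec w (Sum.inl 0) = (α • w) (Sum.inl 0)
            rw [row0, hScst]
            show ((d:ℝ) - 1) * C = α * A
            rw [hA, hC]; ring
          · show (JoinAdj d).mulVec w (Sum.inl 1) = (α • w) (Sum.inl 1)
            rw [row1, hScst]
            show w (Sum.inl 2) + ((d:ℝ) - 1) * C = α * B
            show B + ((d:ℝ) - 1) * C = α * B
            rw [hB, hC]; ring
          · show (JoinAdj d).mulVec w (Sum.inl 2) = (α • w) (Sum.inl 2)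
            rw [row2, hScst]
            show B + ((d:ℝ) - 1) * C = α * B
            rw [hB, hC]; ring
        · rw [rowr d hn j, hScst]
          show A + B + B + (((d:ℝ)-1) * C - C - C) = α * C
          rw [hA, hB, hC]
          linear_combination (-1 : ℝ) * hroot
  · -- upper bound
    rintro μ ⟨v, hv0, hveq⟩
    set S : ℝ := ∑ j : Fin (d-1), v (.inr j) with hS
    set a : ℝ := v (.inl 0) with ha
    set b1 : ℝ := v (.inl 1) with hb1
    set b2 : ℝ := v (.inl 2) with hb2
    have e0 : S = μ * a := by
      have := congrFun hveq (Sum.inl 0)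
      rw [row0] at this
      simpa [Pi.smul_apply, smul_eq_mul] using this
    have e1 : b2 + S = μ * b1 := by
      have := congrFun hveq (Sum.inl 1)
      rw [row1] at this
      simpa [Pi.smul_apply, smul_eq_mul] using this
    have e2 : b1 + S = μ * b2 := by
      have := congrFun hveq (Sum.inl 2)
      rw [row2] at this
      simpa [Pi.smul_apply, smul_eq_mul] using this
    have er : ∀ i : Fin (d-1), a + b1 + b2 +
        (S - v (.inr (mate0 hn i)) - v (.inr (mate1 hn i))) = μ * v (.inr i) := by
      intro i
      have := congrFun hveq (Sum.inr i)
      rw [rowr d hn i] at this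
      simpa [Pi.smul_apply, smul_eq_mul] using this
    rcases Nat.lt_or_ge d 2 with hdlt | hd2
    · -- d = 1
      have hd1' : d = 1 := by omega
      subst hd1'
      have hα1 : (1:ℝ) ≤ α := hmax 1 (by norm_num)
      have hS0 : S = 0 := by simp [hS]
      rw [hS0] at e0 e1 e2
      by_cases hb : b1 = 0
      · have hb2' : b2 = 0 := by
          rcases eq_or_ne μ 0 with rfl | hμ0
          · linarith [e1]
          · have hmb : μ * b2 = 0 := by linarith [e2]
            exact (mul_eq_zero.mp hmb).resolve_left hμ0
        rcases eq_or_ne μ 0 with rfl | hμ0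
        · linarith
        · exfalso
          apply hv0
          have ha0 : a = 0 := by
            have hma : μ * a = 0 := by linarith [e0]
            exact (mul_eq_zero.mp hma).resolve_left hμ0
          funext z
          rcases z with x | j
          · fin_cases x
            · exact ha0
            · exact hb
            · exact hb2'
          · exact j.elim0
      · have hμ2 : (μ ^ 2 - 1) * b1 = 0 := by linear_combination (-μ) * e1 - e2
        have : μ ^ 2 = 1 := by
          rcases mul_eq_zero.mp hμ2 with h | h
          · linarith
          · exact absurd h hb
        nlinarith [sq_nonneg (μ - 1)]
    · -- d ≥ 2
      have hdr : (2:ℝ) ≤ (d:ℝ) := by exact_mod_cast hd2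
      rcases eq_or_ne μ 0 with rfl | hμ0
      · exact hα0
      rcases eq_or_ne μ (-1) with rfl | hμ1
      · linarith
      rcases eq_or_ne μ (-2) with rfl | hμ2
      · linarith
      have hbb : b1 = b2 := by
        have h : (μ + 1) * (b1 - b2) = 0 := by linear_combination e2 - e1
        rcases mul_eq_zero.mp h with h | h
        · exact absurd (by linarith : μ = -1) hμ1
        · linarith
      have hpair : ∀ i : Fin (d-1), v (.inr (mate0 hn i)) = v (.inr (mate1 hn i)) := by
        intro i
        have h0 := er (mate0 hn i)
        have h1 := er (mate1 hn i)
        rw [mate0_mate0, mate1_mate0] at h0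
        rw [mate0_mate1, mate1_mate1] at h1
        have : μ * v (.inr (mate0 hn i)) = μ * v (.inr (mate1 hn i)) := by
          rw [← h0, ← h1]
        exact mul_left_cancel₀ hμ0 this
      have hc : ∀ i : Fin (d-1), (μ + 2) * v (.inr i) = a + b1 + b2 + S := by
        intro i
        have hi0 : v (.inr (mate0 hn i)) = v (.inr i) := by
          rcases mate_self hn i with h | h
          · rw [← h]
          · rw [hpair i, ← h]
        have hi1 : v (.inr (mate1 hn i)) = v (.inr i) := by
          rw [← hpair i, hi0]
        have := er i
        rw [hi0, hi1] at this
        linarith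
      have hconst : ∀ i j : Fin (d-1), v (.inr i) = v (.inr j) := by
        intro i j
        have h : (μ + 2) * (v (.inr i) - v (.inr j)) = 0 := by
          have := hc i
          have := hc j
          linarith [mul_sub (μ + 2) (v (.inr i)) (v (.inr j))]
        rcases mul_eq_zero.mp h with h | h
        · exact absurd (by linarith : μ = -2) hμ2
        · linarith
      set i₀ : Fin (d-1) := ⟨0, by omega⟩ with hi₀
      set c : ℝ := v (.inr i₀) with hcc
      have hSc : S = ((d:ℝ) - 1) * c := by
        rw [hS, Finset.sum_congr rfl (fun j _ => hconst j i₀), Finset.sum_const,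
          Finset.card_univ, Fintype.card_fin, nsmul_eq_mul, hcast]
      have eA : μ * a = ((d:ℝ) - 1) * c := by rw [← hSc, e0]
      have eB : μ * b1 = b1 + ((d:ℝ) - 1) * c := by
        rw [← hSc, ← e1, hbb]
      have eC : (μ + 2) * c = a + 2 * b1 + ((d:ℝ) - 1) * c := by
        have := hc i₀
        rw [hSc] at this
        rw [this, hbb]
        ring
      have hcne : c ≠ 0 := by
        intro hc0
        apply hv0
        have hS0 : S = 0 := by rw [hSc, hc0]; ring
        have ha0 : a = 0 := by
          have : μ * a = 0 := by rw [eA, hc0]; ring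
          exact (mul_eq_zero.mp this).resolve_left hμ0
        have hb10 : b1 = 0 := by
          have h := eC
          rw [hc0, ha0] at h
          have : b1 = 0 := by linarith
          exact this
        funext z
        rcases z with x | j
        · fin_cases x
          · exact ha0
          · exact hb10
          · have hbb2 : b2 = 0 := by rw [← hbb]; exact hb10
            exact hbb2
        · rw [hconst j i₀, ← hcc]; exact hc0
      have key : c * (μ ^ 3 - ((d:ℝ) - 2) * μ ^ 2 - 2 * d * μ + d - 1) = 0 := by
        linear_combination (μ * (μ - 1)) * eC + (μ - 1) * eA + 2 * μ * eB
      have : μ ^ 3 - ((d:ℝ) - 2) * μ ^ 2 - 2 * d * μ + d - 1 = 0 :=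
        (mul_eq_zero.mp key).resolve_left hcne
      exact hmax μ this
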